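/- Every counter system whose step relation 𝒯 consists exactly of the ASM steps induced by a finite set of asynchronous-shared-memory transitions is fully ≼₀-compatible. -/
import Mathlib


namespace CS01

variable {C Q A : Type*}

/-- Configurations of a counter system: a controller state and a counter vector. -/
abbrev Conf (C Q : Type*) := C × (Q → ℕ)

/-- The order `≼₀`: same controller state, pointwise smaller counters,
and the same zero pattern. -/
def Le0 (x y : Conf C Q) : Prop :=
  x.1 = y.1 ∧ (∀ q, x.2 q ≤ y.2 q) ∧ ∀ q, (x.2 q = 0 ↔ y.2 q = 0)

/-- The product order `≼₀ × ≼₀` on pairs of configurations. -/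
def ProdLe0 (s t : Conf C Q × Conf C Q) : Prop :=
  Le0 s.1 t.1 ∧ Le0 s.2 t.2

/-- The abstraction `α`, mapping a configuration to its 01-abstraction. -/
def alpha (x : Conf C Q) : Conf C Q :=
  (x.1, fun q => if x.2 q = 0 then 0 else 1)

/-- Forward `≼₀`-compatibility of a step relation. -/
def FwdCompat (T : Set (Conf C Q × Conf C Q)) : Prop :=
  ∀ x y d, (x, y) ∈ T → Le0 x d → ∃ d', (d, d') ∈ T ∧ Le0 y d'

/-- Backward `≼₀`-compatibility of a step relation. -/
def BwdCompat (T : Set (Conf C Q × Conf C Q)) : Prop :=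
  ∀ x y d', (x, y) ∈ T → Le0 y d' → ∃ d, (d, d') ∈ T ∧ Le0 x d

/-- Steps of a counter system are size-preserving. -/
def SizePreserving [Fintype Q] (T : Set (Conf C Q × Conf C Q)) : Prop :=
  ∀ t ∈ T, ∑ q, t.1.2 q = ∑ q, t.2.2 q

/-- A step of the 01-counter system `𝒞_α`. -/
def AbsStep (T : Set (Conf C Q × Conf C Q)) (x' y' : Conf C Q) : Prop :=
  ∃ t ∈ T, alpha t.1 = x' ∧ alpha t.2 = y'

/-- A finite run of the counter system, starting in an initial configuration. -/
def IsRun (T : Set (Conf C Q × Conf C Q)) (c0 : C) (Q0 : Set Q)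
    {n : ℕ} (ρ : Fin (n + 1) → Conf C Q) : Prop :=
  (ρ 0).1 = c0 ∧ (∀ q ∉ Q0, (ρ 0).2 q = 0) ∧
    ∀ i : Fin n, (ρ i.castSucc, ρ i.succ) ∈ T

/-- A finite run of the 01-counter system, starting in an initial (0/1-valued)
abstract configuration. -/
def IsAbsRun (T : Set (Conf C Q × Conf C Q)) (c0 : C) (Q0 : Set Q)
    {n : ℕ} (σ : Fin (n + 1) → Conf C Q) : Prop :=
  (σ 0).1 = c0 ∧ (∀ q, (σ 0).2 q ≤ 1) ∧ (∀ q ∉ Q0, (σ 0).2 q = 0) ∧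
    ∀ i : Fin n, AbsStep T (σ i.castSucc) (σ i.succ)

/-- Reachability in the counter system. -/
def Reach (T : Set (Conf C Q × Conf C Q)) (c0 : C) (Q0 : Set Q)
    (x : Conf C Q) : Prop :=
  ∃ (n : ℕ) (ρ : Fin (n + 1) → Conf C Q), IsRun T c0 Q0 ρ ∧ ρ (Fin.last n) = x

/-- Reachability in the 01-counter system. -/
def AbsReach (T : Set (Conf C Q × Conf C Q)) (c0 : C) (Q0 : Set Q)
    (x : Conf C Q) : Prop :=
  ∃ (n : ℕ) (σ : Fin (n + 1) → Conf C Q), IsAbsRun T c0 Q0 σ ∧ σ (Fin.last n) = x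

/-- The counter vector obtained when `i` processes move from `p` to `p'`. -/
def moveN [DecidableEq Q] (v : Q → ℕ) (p p' : Q) (i : ℕ) : Q → ℕ :=
  fun q => v q - (if q = p then i else 0) + (if q = p' then i else 0)

/-- An asynchronous-shared-memory step, where the controller state plays the
role of the shared variable: either a write step, where `i ≥ 1` user processes
take a write transition `(p, w(a), p')` and the variable is set to `a`, or a
read step, where `i ≥ 1` user processes take a read transition `(p, r(a), p')`
with `a` equal to the current value of the variable. -/
def ASMStep [DecidableEq Q] (Δw Δr : Set (Q × C × Q)) (x y : Conf C Q) : Prop :=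
  (∃ p a p' i, 1 ≤ i ∧ (p, a, p') ∈ Δw ∧ i ≤ x.2 p ∧
    y.1 = a ∧ y.2 = moveN x.2 p p' i) ∨
  (∃ p p' i, 1 ≤ i ∧ (p, x.1, p') ∈ Δr ∧ i ≤ x.2 p ∧
    y.1 = x.1 ∧ y.2 = moveN x.2 p p' i)

lemma moveN_src [DecidableEq Q] (v : Q → ℕ) (p p' : Q) (i : ℕ) (h : p ≠ p') :
    moveN v p p' i p = v p - i := by
  simp [moveN, h]

lemma moveN_dst [DecidableEq Q] (v : Q → ℕ) (p p' : Q) (i : ℕ) (h : p ≠ p') :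
    moveN v p p' i p' = v p' + i := by
  simp [moveN, Ne.symm h]

lemma moveN_other [DecidableEq Q] (v : Q → ℕ) (p p' q : Q) (i : ℕ)
    (hq : q ≠ p) (hq' : q ≠ p') : moveN v p p' i q = v q := by
  simp [moveN, hq, hq']

lemma moveN_self [DecidableEq Q] (v : Q → ℕ) (p : Q) (i : ℕ) (h : i ≤ v p) :
    moveN v p p i = v := by
  funext q
  rcases eq_or_ne q p with rfl | hqp
  · simp only [moveN, if_pos rfl, ite_true]; omega
  · exact moveN_other v p p q i hqp hqp

lemma step_vec_fwd [DecidableEq Q] (v w : Q → ℕ)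
    (hle : ∀ q, v q ≤ w q) (h0 : ∀ q, v q = 0 ↔ w q = 0)
    (p p' : Q) (i : ℕ) (h1 : 1 ≤ i) (h2 : i ≤ v p) :
    ∃ i', 1 ≤ i' ∧ i' ≤ w p ∧
      ∀ q, moveN v p p' i q ≤ moveN w p p' i' q ∧
        (moveN v p p' i q = 0 ↔ moveN w p p' i' q = 0) := by
  have hp := hle p
  have hp0 := h0 p
  by_cases hpp : p = p'
  · subst hpp
    refine ⟨i, h1, by omega, fun q => ?_⟩
    rw [moveN_self v p i h2, moveN_self w p i (by omega)]
    exact ⟨hle q, h0 q⟩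
  · by_cases hvi : v p = i
    · refine ⟨w p, by omega, le_refl _, fun q => ?_⟩
      rcases eq_or_ne q p with rfl | hqp
      · rw [moveN_src v q p' i hpp, moveN_src w q p' (w q) hpp]; omega
      · rcases eq_or_ne q p' with rfl | hqp'
        · rw [moveN_dst v p q i hpp, moveN_dst w p q (w p) hpp]
          have := hle q; omega
        · rw [moveN_other v p p' q i hqp hqp', moveN_other w p p' q (w p) hqp hqp']
          exact ⟨hle q, h0 q⟩
    · refine ⟨i, h1, by omega, fun q => ?_⟩
      rcases eq_or_ne q p with rfl | hqp
      · rw [moveN_src v q p' i hpp, moveN_src w q p' i hpp]; omega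
      · rcases eq_or_ne q p' with rfl | hqp'
        · rw [moveN_dst v p q i hpp, moveN_dst w p q i hpp]
          have := hle q; omega
        · rw [moveN_other v p p' q i hqp hqp', moveN_other w p p' q i hqp hqp']
          exact ⟨hle q, h0 q⟩

lemma step_vec_bwd [DecidableEq Q] (v w' : Q → ℕ) (p p' : Q) (i : ℕ)
    (h1 : 1 ≤ i) (h2 : i ≤ v p)
    (hle : ∀ q, moveN v p p' i q ≤ w' q)
    (h0 : ∀ q, moveN v p p' i q = 0 ↔ w' q = 0) :
    ∃ i' w, 1 ≤ i' ∧ i' ≤ w p ∧ w' = moveN w p p' i' ∧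
      (∀ q, v q ≤ w q) ∧ ∀ q, (v q = 0 ↔ w q = 0) := by
  by_cases hpp : p = p'
  · subst hpp
    rw [moveN_self v p i h2] at hle h0
    have hp := hle p
    refine ⟨i, w', h1, by omega, (moveN_self w' p i (by omega)).symm, hle, h0⟩
  · have hp := hle p
    have hp0 := h0 p
    have hp' := hle p'
    have hp'0 := h0 p'
    rw [moveN_src v p p' i hpp] at hp hp0
    rw [moveN_dst v p p' i hpp] at hp' hp'0
    have hwp : ∀ j, moveN w' p' p j p = w' p + j :=
      fun j => moveN_dst w' p' p j (Ne.symm hpp)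
    have hwp' : ∀ j, moveN w' p' p j p' = w' p' - j :=
      fun j => moveN_src w' p' p j (Ne.symm hpp)
    have hwo : ∀ j q, q ≠ p → q ≠ p' → moveN w' p' p j q = w' q :=
      fun j q hq hq' => moveN_other w' p' p q j hq' hq
    by_cases hz : v p' = 0
    · -- take i' = w' p'
      refine ⟨w' p', moveN w' p' p (w' p'), by omega, by rw [hwp]; omega, ?_,
        fun q => ?_, fun q => ?_⟩
      · funext q
        rcases eq_or_ne q p with rfl | hqp
        · rw [moveN_src _ q p' _ hpp, hwp]; omega
        · rcases eq_or_ne q p' with rfl | hqp'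
          · rw [moveN_dst _ p q _ hpp, hwp']; omega
          · rw [moveN_other _ p p' q _ hqp hqp', hwo _ q hqp hqp']
      · rcases eq_or_ne q p with rfl | hqp
        · rw [hwp]; omega
        · rcases eq_or_ne q p' with rfl | hqp'
          · rw [hwp']; omega
          · rw [hwo _ q hqp hqp']
            have := hle q; rwa [moveN_other v p p' q i hqp hqp'] at this
      · rcases eq_or_ne q p with rfl | hqp
        · rw [hwp]; omega
        · rcases eq_or_ne q p' with rfl | hqp'
          · rw [hwp']; omega
          · rw [hwo _ q hqp hqp']
            have := h0 q; rwa [moveN_other v p p' q i hqp hqp'] at this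
    · -- take i' = i
      refine ⟨i, moveN w' p' p i, h1, by rw [hwp]; omega, ?_,
        fun q => ?_, fun q => ?_⟩
      · funext q
        rcases eq_or_ne q p with rfl | hqp
        · rw [moveN_src _ q p' _ hpp, hwp]; omega
        · rcases eq_or_ne q p' with rfl | hqp'
          · rw [moveN_dst _ p q _ hpp, hwp']; omega
          · rw [moveN_other _ p p' q _ hqp hqp', hwo _ q hqp hqp']
      · rcases eq_or_ne q p with rfl | hqp
        · rw [hwp]; omega
        · rcases eq_or_ne q p' with rfl | hqp'
          · rw [hwp']; omega
          · rw [hwo _ q hqp hqp']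
            have := hle q; rwa [moveN_other v p p' q i hqp hqp'] at this
      · rcases eq_or_ne q p with rfl | hqp
        · rw [hwp]; omega
        · rcases eq_or_ne q p' with rfl | hqp'
          · rw [hwp']; omega
          · rw [hwo _ q hqp hqp']
            have := h0 q; rwa [moveN_other v p p' q i hqp hqp'] at this

/-- Every counter system whose steps are exactly the ASM steps
induced by a finite set of asynchronous-shared-memory transitions is fully
`≼₀`-compatible. -/
theorem stmt6 [Fintype C] [Fintype Q] [Nonempty C] [Nonempty Q] [DecidableEq Q]
    (Δw Δr : Set (Q × C × Q))
    (T : Set (Conf C Q × Conf C Q))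
    (hT : ∀ x y : Conf C Q, (x, y) ∈ T ↔ ASMStep Δw Δr x y) :
    FwdCompat T ∧ BwdCompat T := by
  constructor
  · intro x y d hxy hxd
    obtain ⟨hc, hle, h0⟩ := hxd
    rcases (hT x y).1 hxy with ⟨p, a, p', i, h1, hΔ, hi, hy1, hy2⟩ |
      ⟨p, p', i, h1, hΔ, hi, hy1, hy2⟩
    · obtain ⟨i', hi'1, hi'le, hmv⟩ := step_vec_fwd x.2 d.2 hle h0 p p' i h1 hi
      refine ⟨(a, moveN d.2 p p' i'), (hT _ _).2 (Or.inl ⟨p, a, p', i', hi'1, hΔ, hi'le,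
        rfl, rfl⟩), hy1, ?_, ?_⟩ <;> intro q <;> rw [hy2]
      · exact (hmv q).1
      · exact (hmv q).2
    · obtain ⟨i', hi'1, hi'le, hmv⟩ := step_vec_fwd x.2 d.2 hle h0 p p' i h1 hi
      refine ⟨(d.1, moveN d.2 p p' i'), (hT _ _).2 (Or.inr ⟨p, p', i', hi'1, hc ▸ hΔ, hi'le,
        rfl, rfl⟩), hy1.trans hc, ?_, ?_⟩ <;> intro q <;> rw [hy2]
      · exact (hmv q).1
      · exact (hmv q).2
  · intro x y d' hxy hyd'
    obtain ⟨hc, hle, h0⟩ := hyd'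
    rcases (hT x y).1 hxy with ⟨p, a, p', i, h1, hΔ, hi, hy1, hy2⟩ |
      ⟨p, p', i, h1, hΔ, hi, hy1, hy2⟩
    · rw [hy2] at hle h0
      obtain ⟨i', w, hi'1, hi'le, hw', hwle, hw0⟩ := step_vec_bwd x.2 d'.2 p p' i h1 hi hle h0
      exact ⟨(x.1, w), (hT _ _).2 (Or.inl ⟨p, a, p', i', hi'1, hΔ, hi'le,
        by rw [← hc, hy1], hw'⟩), rfl, hwle, hw0⟩
    · rw [hy2] at hle h0
      obtain ⟨i', w, hi'1, hi'le, hw', hwle, hw0⟩ := step_vec_bwd x.2 d'.2 p p' i h1 hi hle h0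
      exact ⟨(x.1, w), (hT _ _).2 (Or.inr ⟨p, p', i', hi'1, hΔ, hi'le,
        by rw [← hc, hy1], hw'⟩), rfl, hwle, hw0⟩

end CS01
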